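/- The center of G = A(n,θ) (for n > 1 and θ a generator of the Galois group) is exactly the set of elements (0,b) with b ∈ F_{2^n}. -/

import Mathlib

noncomputable section

abbrev Fq (n : ℕ) : Type := GaloisField 2 n

instance (n : ℕ) : Fintype (Fq n) := Fintype.ofFinite _

@[ext] structure SuzukiA (n : ℕ) (θ : Fq n ≃+* Fq n) where
  a : Fq n
  b : Fq n

namespace SuzukiA

variable {n : ℕ} {θ : Fq n ≃+* Fq n}

instance : Mul (SuzukiA n θ) := ⟨fun x y => ⟨x.a + y.a, x.b + y.b + x.a * θ y.a⟩⟩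
instance : One (SuzukiA n θ) := ⟨⟨0, 0⟩⟩
instance : Inv (SuzukiA n θ) := ⟨fun x => ⟨x.a, x.b + x.a * θ x.a⟩⟩

theorem mul_def (x y : SuzukiA n θ) :
    x * y = ⟨x.a + y.a, x.b + y.b + x.a * θ y.a⟩ := rfl

@[simp] theorem one_a : (1 : SuzukiA n θ).a = 0 := rfl
@[simp] theorem one_b : (1 : SuzukiA n θ).b = 0 := rfl

instance : Group (SuzukiA n θ) where
  mul_assoc x y z := by ext <;> simp [mul_def, map_add] <;> ring
  one_mul x := by ext <;> simp [mul_def]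
  mul_one x := by ext <;> simp [mul_def]
  inv_mul_cancel x := by
    have h2 : (2 : Fq n) = 0 := by
      have := CharP.cast_eq_zero (Fq n) 2
      exact_mod_cast this
    show (⟨x.a, x.b + x.a * θ x.a⟩ * x : SuzukiA n θ) = 1
    ext
    · show x.a + x.a = 0
      linear_combination x.a * h2
    · show x.b + x.a * θ x.a + x.b + x.a * θ x.a = 0
      linear_combination (x.b + x.a * θ x.a) * h2

instance : Fintype (SuzukiA n θ) :=
  Fintype.ofEquiv (Fq n × Fq n)
    { toFun := fun p => ⟨p.1, p.2⟩
      invFun := fun x => (x.a, x.b)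
      left_inv := fun _ => rfl
      right_inv := fun _ => rfl }

end SuzukiA

open SuzukiA in
theorem stmt3 (n : ℕ) (hn : 1 < n) (hodd : Odd n) (θ : Fq n ≃+* Fq n)
    (hθ : ∀ σ : Fq n ≃+* Fq n, σ ∈ Subgroup.zpowers θ) :
    ∀ x : SuzukiA n θ, x ∈ Subgroup.center (SuzukiA n θ) ↔ x.a = 0 := by
  intro x
  rw [Subgroup.mem_center_iff]
  constructor
  · intro h
    by_contra ha
    -- key: for all c, c * θ x.a = x.a * θ c
    have key : ∀ c : Fq n, c * θ x.a = x.a * θ c := by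
      intro c
      have := congrArg SuzukiA.b (h ⟨c, 0⟩)
      simpa [mul_def] using this
    have hfix : θ x.a = x.a := by
      have := key 1
      simpa using this
    have hall : ∀ c : Fq n, θ c = c := by
      intro c
      have := key c
      rw [hfix] at this
      exact mul_left_cancel₀ ha (by linear_combination -this)
    have hθ1 : θ = 1 := by
      ext c
      exact hall c
    -- frobenius is a ring equiv since GaloisField 2 n is perfect of char 2
    have hfrob := hθ (frobeniusEquiv (Fq n) 2)
    rw [hθ1, Subgroup.zpowers_one_eq_bot, Subgroup.mem_bot] at hfrob
    have hsq : ∀ c : Fq n, c ^ 2 = c := by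
      intro c
      have := congrArg (fun σ : Fq n ≃+* Fq n => σ c) hfrob
      simpa [frobeniusEquiv_apply, frobenius_def] using this
    have h01 : ∀ c : Fq n, c = 0 ∨ c = 1 := by
      intro c
      have : c * (c - 1) = 0 := by
        have := hsq c
        ring_nf
        ring_nf at this
        linear_combination this
      rcases mul_eq_zero.mp this with h | h
      · exact Or.inl h
      · exact Or.inr (sub_eq_zero.mp h)
    have hsurj : Function.Surjective (fun i : Fin 2 => if i = 0 then (0 : Fq n) else 1) := by
      intro c
      rcases h01 c with h | h
      · exact ⟨0, by simp [h]⟩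
      · exact ⟨1, by simp [h]⟩
    have hcard := Fintype.card_le_of_surjective _ hsurj
    have hc : Nat.card (Fq n) = 2 ^ n := GaloisField.card 2 n (by omega)
    rw [Nat.card_eq_fintype_card] at hc
    simp [hc] at hcard
    have : 2 ^ 1 < 2 ^ n := Nat.pow_lt_pow_right (by norm_num) hn
    omega
  · intro ha g
    ext
    · show g.a + x.a = x.a + g.a
      ring
    · show g.b + x.b + g.a * θ x.a = x.b + g.b + x.a * θ g.a
      rw [ha]
      simp [add_comm]
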